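/- Let K ⊆ X be a compact subset of a metric space X, Y a metric space, and f : X → Y continuous. Then f restricted to K admits a modulus of continuity which is bounded, continuous, concave, nondecreasing, and vanishing at 0; that is, there exists ω : [0,∞) → [0,∞) bounded, continuous, concave, nondecreasing with ω(0)=0 such that d(f(x), f(y)) ≤ ω(d(x,y)) for all x, y ∈ K. -/

import Mathlib

/-- A continuous function on a metric space admits, on every compact
subset, a bounded, continuous, concave, nondecreasing modulus of continuity
vanishing at `0`. -/
theorem exists_concave_modulus_of_continuity
    {X Y : Type*} [MetricSpace X] [MetricSpace Y]
    (K : Set X) (hK : IsCompact K)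
    (f : X → Y) (hf : Continuous f) :
    ∃ ω : ℝ → ℝ,
      (∀ t, 0 ≤ t → 0 ≤ ω t) ∧
      (∃ C : ℝ, ∀ t, 0 ≤ t → ω t ≤ C) ∧
      ContinuousOn ω (Set.Ici (0 : ℝ)) ∧
      ConcaveOn ℝ (Set.Ici (0 : ℝ)) ω ∧
      MonotoneOn ω (Set.Ici (0 : ℝ)) ∧
      ω 0 = 0 ∧
      ∀ x ∈ K, ∀ y ∈ K, dist (f x) (f y) ≤ ω (dist x y) := by
  -- A bound M on distances in f '' K
  obtain ⟨C, hC⟩ := Metric.isBounded_iff.mp (hK.image hf).isBounded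
  set M : ℝ := max C 0 with hM
  have hM0 : 0 ≤ M := le_max_right _ _
  have hMb : ∀ x ∈ K, ∀ y ∈ K, dist (f x) (f y) ≤ M := fun x hx y hy =>
    (hC (Set.mem_image_of_mem f hx) (Set.mem_image_of_mem f hy)).trans (le_max_left _ _)
  -- the raw (non-concave) modulus
  set m : ℝ → ℝ := fun δ => sSup {d | ∃ x ∈ K, ∃ y ∈ K, dist x y ≤ δ ∧ d = dist (f x) (f y)}
    with hm
  have hm0 : ∀ δ, 0 ≤ m δ := fun δ =>
    Real.sSup_nonneg (by rintro d ⟨x, hx, y, hy, -, rfl⟩; exact dist_nonneg)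
  have hmM : ∀ δ, m δ ≤ M := fun δ =>
    Real.sSup_le (by rintro d ⟨x, hx, y, hy, -, rfl⟩; exact hMb x hx y hy) hM0
  have hmem : ∀ δ, ∀ x ∈ K, ∀ y ∈ K, dist x y ≤ δ → dist (f x) (f y) ≤ m δ := by
    intro δ x hx y hy hd
    refine le_csSup ⟨M, ?_⟩ ⟨x, hx, y, hy, hd, rfl⟩
    rintro d ⟨x', hx', y', hy', -, rfl⟩; exact hMb x' hx' y' hy'
  -- uniform continuity: m δ is small for small δ
  have hUC : ∀ ε > 0, ∃ δ > 0, m δ ≤ ε := by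
    intro ε hε
    obtain ⟨δ, hδ, hδ'⟩ := Metric.uniformContinuousOn_iff.mp
      (hK.uniformContinuousOn_of_continuous hf.continuousOn) ε hε
    refine ⟨δ/2, by linarith, Real.sSup_le ?_ hε.le⟩
    rintro d ⟨x, hx, y, hy, hd, rfl⟩
    exact (hδ' x hx y hy (lt_of_le_of_lt hd (by linarith))).le
  -- the concave modulus as an infimum of affine functions
  set ι := {δ : ℝ // 0 < δ} with hι
  haveI : Nonempty ι := ⟨⟨1, one_pos⟩⟩
  set ω : ℝ → ℝ := fun t => ⨅ δ : ι, (m δ.1 + (M / δ.1) * t) with hω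
  have hterm : ∀ t, 0 ≤ t → ∀ δ : ι, 0 ≤ m δ.1 + (M / δ.1) * t := fun t ht δ =>
    add_nonneg (hm0 _) (mul_nonneg (div_nonneg hM0 δ.2.le) ht)
  have hbdd : ∀ t, 0 ≤ t → BddBelow (Set.range fun δ : ι => m δ.1 + (M / δ.1) * t) := by
    intro t ht; exact ⟨0, by rintro x ⟨δ, rfl⟩; exact hterm t ht δ⟩
  have hωnn : ∀ t, 0 ≤ t → 0 ≤ ω t := fun t ht => le_ciInf (hterm t ht)
  have hωle : ∀ t, 0 ≤ t → ∀ δ : ι, ω t ≤ m δ.1 + (M / δ.1) * t := fun t ht δ =>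
    ciInf_le (hbdd t ht) δ
  -- ω 0 = 0
  have hω0 : ω 0 = 0 := by
    refine le_antisymm (le_of_forall_pos_le_add fun ε hε => ?_) (hωnn 0 le_rfl)
    obtain ⟨δ, hδ, hδ'⟩ := hUC ε hε
    calc ω 0 ≤ m δ + (M / δ) * 0 := hωle 0 le_rfl ⟨δ, hδ⟩
      _ = m δ := by ring
      _ ≤ 0 + ε := by linarith
  -- bounded by M
  have hωM : ∀ t, 0 ≤ t → ω t ≤ M := by
    intro t ht
    refine le_of_forall_pos_le_add fun ε hε => ?_
    have hδpos : 0 < M * t / ε + 1 := by positivity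
    calc ω t ≤ m (M * t / ε + 1) + (M / (M * t / ε + 1)) * t := hωle t ht ⟨_, hδpos⟩
      _ ≤ M + M * t / (M * t / ε + 1) := by
          have := hmM (M * t / ε + 1); rw [div_mul_eq_mul_div]; linarith
      _ ≤ M + ε := by
          have : M * t / (M * t / ε + 1) ≤ ε := by
            rw [div_le_iff₀ hδpos]
            have h1 : ε * (M * t / ε) = M * t := by field_simp
            nlinarith
          linarith
  -- monotone
  have hωmono : MonotoneOn ω (Set.Ici (0 : ℝ)) := by
    intro s hs t ht hst
    refine le_ciInf fun δ => (hωle s hs δ).trans ?_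
    have : (M / δ.1) * s ≤ (M / δ.1) * t :=
      mul_le_mul_of_nonneg_left hst (div_nonneg hM0 δ.2.le)
    linarith
  -- concave
  have hωconc : ConcaveOn ℝ (Set.Ici (0 : ℝ)) ω := by
    refine ⟨convex_Ici 0, fun s hs t ht a b ha hb hab => ?_⟩
    refine le_ciInf fun δ => ?_
    have h1 : a * ω s ≤ a * (m δ.1 + (M / δ.1) * s) :=
      mul_le_mul_of_nonneg_left (hωle s hs δ) ha
    have h2 : b * ω t ≤ b * (m δ.1 + (M / δ.1) * t) :=
      mul_le_mul_of_nonneg_left (hωle t ht δ) hb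
    have h3 : a * (m δ.1 + (M / δ.1) * s) + b * (m δ.1 + (M / δ.1) * t)
        = m δ.1 + (M / δ.1) * (a * s + b * t) := by
      have : a * m δ.1 + b * m δ.1 = m δ.1 := by rw [← add_mul, hab, one_mul]
      ring_nf; linarith [this]
    simp only [smul_eq_mul]
    linarith
  -- continuous on Ici 0
  have hωcont : ContinuousOn ω (Set.Ici (0 : ℝ)) := by
    intro t ht
    rcases eq_or_lt_of_le (Set.mem_Ici.mp ht) with h0 | h0
    · subst h0
      rw [Metric.continuousWithinAt_iff]
      intro ε hε
      obtain ⟨δ, hδ, hδ'⟩ := hUC (ε / 2) (by linarith)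
      refine ⟨(ε / 2) / (M / δ + 1), by positivity, fun s hs hds => ?_⟩
      have hs0 : 0 ≤ s := hs
      have hMδ : 0 < M / δ + 1 := by positivity
      have hslt : s < (ε / 2) / (M / δ + 1) := by
        rw [Real.dist_eq, abs_of_nonneg (by linarith)] at hds; linarith [hds]
      have : ω s ≤ m δ + (M / δ) * s := hωle s hs0 ⟨δ, hδ⟩
      have h4 : (M / δ) * s ≤ (M / δ + 1) * s :=
        mul_le_mul_of_nonneg_right (by linarith) hs0
      have h5 : (M / δ + 1) * s < ε / 2 := by
        calc (M / δ + 1) * s < (M / δ + 1) * ((ε / 2) / (M / δ + 1)) :=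
              mul_lt_mul_of_pos_left hslt hMδ
          _ = ε / 2 := by field_simp
      rw [Real.dist_eq, hω0, sub_zero, abs_of_nonneg (hωnn s hs0)]
      linarith
    · have hconcIoi : ConcaveOn ℝ (Set.Ioi (0 : ℝ)) ω :=
        hωconc.subset Set.Ioi_subset_Ici_self (convex_Ioi 0)
      have := hconcIoi.continuousOn isOpen_Ioi
      exact ((this t h0).continuousAt (Ioi_mem_nhds h0)).continuousWithinAt
  -- the modulus property
  refine ⟨ω, hωnn, ⟨M, hωM⟩, hωcont, hωconc, hωmono, hω0, fun x hx y hy => ?_⟩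
  refine le_ciInf fun δ => ?_
  by_cases hd : dist x y ≤ δ.1
  · have := hmem δ.1 x hx y hy hd
    have : 0 ≤ (M / δ.1) * dist x y := mul_nonneg (div_nonneg hM0 δ.2.le) dist_nonneg
    linarith [hmem δ.1 x hx y hy hd]
  · push_neg at hd
    have h1 : dist (f x) (f y) ≤ M := hMb x hx y hy
    have h2 : M ≤ (M / δ.1) * dist x y := by
      rw [div_mul_eq_mul_div, le_div_iff₀ δ.2]
      exact mul_le_mul_of_nonneg_left hd.le hM0
    linarith [hm0 δ.1]
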